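/- Let K = F_q((x^{-1})), R = F_q[x], and let Λ ≤ K^n be a k-sublattice (1 ≤ k ≤ n). Then Λ has an orthogonal R-basis; moreover, an R-basis of Λ is orthogonal if and only if it is a basis of successive minima (i.e., its elements v_1,…,v_k satisfy ‖v_i‖ = λ_i(Λ) for all i, after reordering by norm). -/

import Mathlib

open scoped NNReal

open Classical in
/-- The absolute value `|f| = q^{-ν(f)}` on `K = Fq((x⁻¹))`, realized as the Laurent series
field `Fq((t))` with `t = x⁻¹`, so that the valuation `ν` is the `t`-adic order. -/
noncomputable def kabs (Fq : Type) [Field Fq] [Fintype Fq] (f : LaurentSeries Fq) : ℝ≥0 :=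
  if f = 0 then 0 else (Fintype.card Fq : ℝ≥0) ^ (-(HahnSeries.order f))

/-- The embedding of the polynomial ring `R = Fq[x]` into `K = Fq((x⁻¹))`, sending `x` to
`t⁻¹`, i.e. to the Laurent series `single (-1) 1`. -/
noncomputable def polyToK (Fq : Type) [Field Fq] [Fintype Fq] (p : Polynomial Fq) :
    LaurentSeries Fq :=
  Polynomial.eval₂ HahnSeries.C (HahnSeries.single (-1 : ℤ) (1 : Fq)) p

/-- The infinity norm on `K^ι`, `K = Fq((x⁻¹))`. -/
noncomputable def vnorm (Fq : Type) [Field Fq] [Fintype Fq] {ι : Type} [Fintype ι]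
    (v : ι → LaurentSeries Fq) : ℝ≥0 :=
  Finset.univ.sup fun i => kabs Fq (v i)

/-- A (finite) family of vectors of `K^ι₁` is orthogonal if its members are nonzero and the
norm of any linear combination of them is the maximum of the norms of the summands. -/
def IsOrthTuple (Fq : Type) [Field Fq] [Fintype Fq] {ι₁ ι₂ : Type} [Fintype ι₁] [Fintype ι₂]
    (u : ι₂ → ι₁ → LaurentSeries Fq) : Prop :=
  (∀ j, u j ≠ 0) ∧
    ∀ c : ι₂ → LaurentSeries Fq,
      vnorm Fq (∑ j, c j • u j) = Finset.univ.sup fun j => vnorm Fq (c j • u j)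

/-- A square matrix over `R = Fq[x]` is `(l, q^m)`-Hadamard if its entries have degree at
most `l`, its columns form an orthogonal set in `K^ι`, and `|det| = q^m`. -/
def IsHadamard (Fq : Type) [Field Fq] [Fintype Fq] {ι : Type} [Fintype ι] [DecidableEq ι]
    (l m : ℕ) (A : Matrix ι ι (Polynomial Fq)) : Prop :=
  (∀ i j, (A i j).degree ≤ (l : ℕ)) ∧
    IsOrthTuple Fq (fun j i => polyToK Fq (A i j)) ∧
    kabs Fq (polyToK Fq A.det) = (Fintype.card Fq : ℝ≥0) ^ m

/-- `v` is an `R`-basis of the `k`-sublattice `Λ` of `K^n` (`R = Fq[x]`, `K = Fq((x⁻¹))`):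
the vectors `v j` are `K`-linearly independent and `Λ = R v 0 ⊕ ⋯ ⊕ R v (k-1)`. -/
def IsKSublatticeBasis (Fq : Type) [Field Fq] [Fintype Fq] {n k : ℕ}
    (Λ : Set (Fin n → LaurentSeries Fq)) (v : Fin k → Fin n → LaurentSeries Fq) : Prop :=
  LinearIndependent (LaurentSeries Fq) v ∧
    Λ = {w | ∃ a : Fin k → Polynomial Fq, w = ∑ j, polyToK Fq (a j) • v j}

/-- A subset `Λ` of `K^n` is a `k`-sublattice if it is the `R`-span of `k` `K`-linearly
independent vectors. -/
def IsKSublattice (Fq : Type) [Field Fq] [Fintype Fq] (k : ℕ) {n : ℕ}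
    (Λ : Set (Fin n → LaurentSeries Fq)) : Prop :=
  ∃ v : Fin k → Fin n → LaurentSeries Fq, IsKSublatticeBasis Fq Λ v

/-- The `i`-th successive minimum of `Λ ≤ K^n`: the infimum of `r > 0` such that `Λ`
contains `i` linearly independent vectors of norm at most `r`. -/
noncomputable def sminima (Fq : Type) [Field Fq] [Fintype Fq] {n : ℕ}
    (Λ : Set (Fin n → LaurentSeries Fq)) (i : ℕ) : ℝ≥0 :=
  sInf {r : ℝ≥0 | ∃ w : Fin i → Fin n → LaurentSeries Fq,
    (∀ j, w j ∈ Λ) ∧ LinearIndependent (LaurentSeries Fq) w ∧ ∀ j, vnorm Fq (w j) ≤ r}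

section Basics

variable {Fq : Type} [Field Fq] [Fintype Fq]

local notation "K" => LaurentSeries Fq
local notation "q" => (Fintype.card Fq : ℝ≥0)

lemma q_pos : (0:ℝ≥0) < q := Nat.cast_pos.mpr Fintype.card_pos

lemma q_one_lt : (1:ℝ≥0) < q := by exact_mod_cast Fintype.one_lt_card

lemma kabs_of_ne {f : K} (h : f ≠ 0) : kabs Fq f = q ^ (-f.order) := if_neg h

@[simp] lemma kabs_zero : kabs Fq 0 = 0 := if_pos rfl

lemma kabs_ne_zero {f : K} (h : f ≠ 0) : kabs Fq f ≠ 0 := by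
  rw [kabs_of_ne h]; exact (zpow_pos q_pos _).ne'

lemma kabs_eq_zero {f : K} : kabs Fq f = 0 ↔ f = 0 := by
  constructor
  · intro h; by_contra hf; exact kabs_ne_zero hf h
  · rintro rfl; simp

lemma kabs_mul (f g : K) : kabs Fq (f * g) = kabs Fq f * kabs Fq g := by
  by_cases hf : f = 0
  · simp [hf]
  by_cases hg : g = 0
  · simp [hg]
  rw [kabs_of_ne hf, kabs_of_ne hg, kabs_of_ne (mul_ne_zero hf hg),
    HahnSeries.order_mul hf hg, neg_add, zpow_add₀ q_pos.ne']

lemma kabs_add_le (f g : K) : kabs Fq (f + g) ≤ max (kabs Fq f) (kabs Fq g) := by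
  by_cases hf : f = 0
  · simp [hf]
  by_cases hg : g = 0
  · simp [hg]
  by_cases hfg : f + g = 0
  · simp [hfg]
  rw [kabs_of_ne hf, kabs_of_ne hg, kabs_of_ne hfg]
  calc q ^ (-(f+g).order) ≤ q ^ (-(min f.order g.order)) := by
        apply zpow_le_zpow_right₀ q_one_lt.le
        exact neg_le_neg (HahnSeries.min_order_le_order_add hfg)
    _ = max (q ^ (-f.order)) (q ^ (-g.order)) := by
        rcases min_cases f.order g.order with ⟨h1, h2⟩ | ⟨h1, h2⟩ <;> rw [h1]
        · exact (max_eq_left (zpow_le_zpow_right₀ q_one_lt.le (neg_le_neg h2))).symm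
        · exact (max_eq_right (zpow_le_zpow_right₀ q_one_lt.le (neg_le_neg h2.le))).symm

end Basics
section VN
set_option linter.unusedSectionVars false

open Classical

variable {Fq : Type} [Field Fq] [Fintype Fq]

local notation "K" => LaurentSeries Fq
local notation "q" => (Fintype.card Fq : ℝ≥0)

variable {ι : Type} [Fintype ι]

lemma vsupp_nonempty {v : ι → K} (h : v ≠ 0) :
    (Finset.univ.filter (fun i => v i ≠ 0)).Nonempty := by
  obtain ⟨i, hi⟩ := Function.ne_iff.mp h
  exact ⟨i, by simpa using hi⟩

open Classical in
/-- `‖v‖ = q^{-dd v}` for `v ≠ 0`. -/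
noncomputable def dd (v : ι → LaurentSeries Fq) : ℤ :=
  if h : v = 0 then 0
  else (Finset.univ.filter (fun i => v i ≠ 0)).inf' (vsupp_nonempty h) (fun i => (v i).order)

lemma dd_le {v : ι → K} {i : ι} (hi : v i ≠ 0) : dd v ≤ (v i).order := by
  have hv : v ≠ 0 := fun h => hi (by simp [h])
  rw [dd, dif_neg hv]
  exact Finset.inf'_le _ (by simpa using hi)

lemma exists_dd {v : ι → K} (h : v ≠ 0) : ∃ i, v i ≠ 0 ∧ (v i).order = dd v := by
  rw [dd, dif_neg h]
  obtain ⟨i, hi, hv⟩ := Finset.exists_mem_eq_inf' (vsupp_nonempty h) (fun i => (v i).order)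
  exact ⟨i, by simpa using hi, hv.symm⟩

lemma coeff_eq_zero_of_lt_dd {v : ι → K} {m : ℤ} (hm : m < dd v) (i : ι) :
    (v i).coeff m = 0 := by
  by_cases hi : v i = 0
  · simp [hi]
  · exact HahnSeries.coeff_eq_zero_of_lt_order (lt_of_lt_of_le hm (dd_le hi))

lemma dd_le_of_coeff_ne {v : ι → K} {m : ℤ} {i : ι} (h : (v i).coeff m ≠ 0) : dd v ≤ m :=
  le_trans (dd_le (fun h0 => h (by simp [h0]))) (HahnSeries.order_le_of_coeff_ne_zero h)

lemma vnorm_eq {v : ι → K} (h : v ≠ 0) : vnorm Fq v = q ^ (-(dd v)) := by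
  apply le_antisymm
  · apply Finset.sup_le
    intro i _
    by_cases hi : v i = 0
    · simp [hi]
    · rw [kabs_of_ne hi]
      exact zpow_le_zpow_right₀ q_one_lt.le (neg_le_neg (dd_le hi))
  · obtain ⟨i, hi, hd⟩ := exists_dd h
    rw [← hd, ← kabs_of_ne hi]
    exact Finset.le_sup (f := fun i => kabs Fq (v i)) (Finset.mem_univ i)

@[simp] lemma vnorm_zero : vnorm Fq (0 : ι → K) = 0 := by
  apply le_antisymm _ (zero_le)
  apply Finset.sup_le; intro i _; simp

lemma vnorm_ne_zero {v : ι → K} (h : v ≠ 0) : vnorm Fq v ≠ 0 := by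
  rw [vnorm_eq h]; exact (zpow_pos q_pos _).ne'

lemma vnorm_eq_zero {v : ι → K} : vnorm Fq v = 0 ↔ v = 0 := by
  constructor
  · intro h; by_contra hv; exact vnorm_ne_zero hv h
  · rintro rfl; simp

lemma vnorm_lt_vnorm {v w : ι → K} (hv : v ≠ 0) (hw : w ≠ 0) :
    vnorm Fq v < vnorm Fq w ↔ dd w < dd v := by
  rw [vnorm_eq hv, vnorm_eq hw, zpow_lt_zpow_iff_right₀ q_one_lt, neg_lt_neg_iff]

lemma vnorm_smul (c : K) (v : ι → K) : vnorm Fq (c • v) = kabs Fq c * vnorm Fq v := by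
  rw [vnorm, vnorm, NNReal.mul_finset_sup]
  congr 1; funext i
  rw [Pi.smul_apply, smul_eq_mul, kabs_mul]

lemma vnorm_add_le (v w : ι → K) : vnorm Fq (v + w) ≤ max (vnorm Fq v) (vnorm Fq w) := by
  apply Finset.sup_le
  intro i _
  calc kabs Fq ((v + w) i) ≤ max (kabs Fq (v i)) (kabs Fq (w i)) := kabs_add_le _ _
    _ ≤ _ := max_le_max (Finset.le_sup (f := fun i => kabs Fq (v i)) (Finset.mem_univ i))
        (Finset.le_sup (f := fun i => kabs Fq (w i)) (Finset.mem_univ i))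

lemma vnorm_sum_le {α : Type*} (s : Finset α) (f : α → (ι → K)) :
    vnorm Fq (∑ a ∈ s, f a) ≤ s.sup (fun a => vnorm Fq (f a)) := by
  induction s using Finset.cons_induction with
  | empty => simp
  | cons a s ha ih =>
      rw [Finset.sum_cons, Finset.sup_cons]
      exact le_trans (vnorm_add_le _ _) (max_le_max le_rfl ih)

lemma vnorm_le_of_coeff {v : ι → K} {M : ℤ} (h : ∀ i, ∀ m ≤ M, (v i).coeff m = 0) :
    vnorm Fq v ≤ q ^ (-(M + 1)) := by
  apply Finset.sup_le
  intro i _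
  by_cases hi : v i = 0
  · simp [hi]
  rw [kabs_of_ne hi]
  apply zpow_le_zpow_right₀ q_one_lt.le
  apply neg_le_neg
  by_contra hc
  exact HahnSeries.coeff_order_eq_zero.not.2 hi (h i _ (by omega))

lemma le_vnorm_of_coeff {v : ι → K} {m : ℤ} {i : ι} (h : (v i).coeff m ≠ 0) :
    q ^ (-m) ≤ vnorm Fq v := by
  have hi : v i ≠ 0 := fun h0 => h (by simp [h0])
  calc q ^ (-m) ≤ q ^ (-(v i).order) :=
        zpow_le_zpow_right₀ q_one_lt.le (neg_le_neg (HahnSeries.order_le_of_coeff_ne_zero h))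
    _ = kabs Fq (v i) := (kabs_of_ne hi).symm
    _ ≤ _ := Finset.le_sup (f := fun i => kabs Fq (v i)) (Finset.mem_univ i)

end VN
section PK
set_option linter.unusedSectionVars false

open Polynomial HahnSeries

variable {Fq : Type} [Field Fq] [Fintype Fq]

local notation "K" => LaurentSeries Fq
local notation "q" => (Fintype.card Fq : ℝ≥0)

lemma hs_coeff_sum {α : Type*} (s : Finset α) (f : α → K) (m : ℤ) :
    (∑ a ∈ s, f a).coeff m = ∑ a ∈ s, (f a).coeff m := by
  induction s using Finset.cons_induction with
  | empty => simp
  | cons a s ha ih => rw [Finset.sum_cons, Finset.sum_cons, HahnSeries.coeff_add, ih]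

lemma polyToK_add (p r : Polynomial Fq) :
    polyToK Fq (p + r) = polyToK Fq p + polyToK Fq r := Polynomial.eval₂_add _ _

lemma polyToK_mul (p r : Polynomial Fq) :
    polyToK Fq (p * r) = polyToK Fq p * polyToK Fq r := Polynomial.eval₂_mul _ _

@[simp] lemma polyToK_zero : polyToK Fq 0 = 0 := Polynomial.eval₂_zero _ _

@[simp] lemma polyToK_one : polyToK Fq 1 = 1 := Polynomial.eval₂_one _ _

lemma polyToK_C_mul_X_pow (γ : Fq) (e : ℕ) :
    polyToK Fq (Polynomial.C γ * X ^ e) = HahnSeries.single (-(e : ℤ)) γ := by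
  rw [polyToK, Polynomial.eval₂_mul, Polynomial.eval₂_C, Polynomial.eval₂_X_pow,
    HahnSeries.single_pow]
  have : HahnSeries.C (Γ := ℤ) γ = HahnSeries.single (0 : ℤ) γ := rfl
  rw [this, HahnSeries.single_mul_single]
  norm_num

lemma polyToK_C (γ : Fq) : polyToK Fq (Polynomial.C γ) = HahnSeries.single (0 : ℤ) γ := by
  have := polyToK_C_mul_X_pow γ 0
  simpa using this

lemma polyToK_coeff (p : Polynomial Fq) (m : ℕ) :
    (polyToK Fq p).coeff (-(m : ℤ)) = p.coeff m := by
  rw [polyToK, Polynomial.eval₂_eq_sum, Polynomial.sum_def, hs_coeff_sum]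
  have h1 : ∀ e ∈ p.support,
      (HahnSeries.C (Γ := ℤ) (p.coeff e) * HahnSeries.single (-1 : ℤ) (1:Fq) ^ e).coeff
        (-(m:ℤ)) = if e = m then p.coeff e else 0 := by
    intro e _
    rw [HahnSeries.single_pow]
    have : HahnSeries.C (Γ := ℤ) (p.coeff e) = HahnSeries.single (0 : ℤ) (p.coeff e) := rfl
    rw [this, HahnSeries.single_mul_single, HahnSeries.coeff_single]
    have h2 : (-(m:ℤ) = 0 + e • (-1 : ℤ)) ↔ e = m := by
      rw [zero_add, smul_neg, nsmul_eq_mul, mul_one, neg_inj, Nat.cast_inj, eq_comm]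
    simp only [mul_one, h2, one_pow]
  rw [Finset.sum_congr rfl h1, Finset.sum_ite_eq' p.support m (fun e => p.coeff e)]
  split_ifs with h
  · rfl
  · exact (Polynomial.notMem_support_iff.mp h).symm

lemma polyToK_ne_zero {p : Polynomial Fq} (hp : p ≠ 0) : polyToK Fq p ≠ 0 := by
  intro h
  apply Polynomial.leadingCoeff_ne_zero.mpr hp
  have := polyToK_coeff p p.natDegree
  rw [h, HahnSeries.coeff_zero] at this
  exact this.symm

lemma polyToK_order_le {p : Polynomial Fq} (hp : p ≠ 0) : (polyToK Fq p).order ≤ 0 := by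
  have h : (polyToK Fq p).coeff (-(p.natDegree : ℤ)) ≠ 0 := by
    rw [polyToK_coeff]
    exact Polynomial.leadingCoeff_ne_zero.mpr hp
  exact le_trans (HahnSeries.order_le_of_coeff_ne_zero h) (by omega)

lemma one_le_kabs_polyToK {p : Polynomial Fq} (hp : p ≠ 0) : 1 ≤ kabs Fq (polyToK Fq p) := by
  rw [kabs_of_ne (polyToK_ne_zero hp)]
  exact one_le_zpow q_one_lt.le (by simpa using polyToK_order_le hp)

lemma coeff_mul_zero_of_lt {f g : K} {d m : ℤ} (hg : ∀ m' < d, g.coeff m' = 0)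
    (hm : m < f.order + d) : (f * g).coeff m = 0 := by
  by_cases hf : f = 0
  · simp [hf]
  by_cases hg0 : g = 0
  · simp [hg0]
  have hd : d ≤ g.order := by
    by_contra hc
    exact HahnSeries.coeff_order_eq_zero.not.2 hg0 (hg _ (by omega))
  apply HahnSeries.coeff_eq_zero_of_lt_order
  rw [HahnSeries.order_mul hf hg0]
  omega

lemma coeff_mul_order_add {f g : K} (hf : f ≠ 0) {d : ℤ} (hg : ∀ m' < d, g.coeff m' = 0) :
    (f * g).coeff (f.order + d) = f.coeff f.order * g.coeff d := by
  set r := g.coeff d with hr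
  have hsplit : g = HahnSeries.single d r + (g - HahnSeries.single d r) := by ring
  have h2 : ∀ m' < d + 1, (g - HahnSeries.single d r).coeff m' = 0 := by
    intro m' hm'
    rw [HahnSeries.coeff_sub, HahnSeries.coeff_single]
    rcases lt_or_eq_of_le (Int.lt_add_one_iff.mp hm') with h | h
    · rw [hg _ h, if_neg (by omega), sub_zero]
    · rw [h, if_pos rfl, ← hr, sub_self]
  calc (f * g).coeff (f.order + d)
      = (f * HahnSeries.single d r).coeff (f.order + d)
        + (f * (g - HahnSeries.single d r)).coeff (f.order + d) := by
        conv_lhs => rw [hsplit]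
        rw [mul_add, HahnSeries.coeff_add]
    _ = f.coeff f.order * r := by
        rw [HahnSeries.coeff_mul_single_add,
          coeff_mul_zero_of_lt h2 (by omega), add_zero]

end PK
section Orth
set_option linter.unusedSectionVars false

open Classical

variable {Fq : Type} [Field Fq] [Fintype Fq]

local notation "K" => LaurentSeries Fq
local notation "q" => (Fintype.card Fq : ℝ≥0)

/-- Leading coefficient vector of a vector of Laurent series. -/
noncomputable def LCv {ι : Type} [Fintype ι] (v : ι → LaurentSeries Fq) : ι → Fq :=
  fun i => (v i).coeff (dd v)

variable {ι₁ ι₂ : Type} [Fintype ι₁] [Fintype ι₂]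

lemma vnorm_smul_eq {c : K} {v : ι₁ → K} (hc : c ≠ 0) (hv : v ≠ 0) :
    vnorm Fq (c • v) = q ^ (-(c.order + dd v)) := by
  rw [vnorm_smul, kabs_of_ne hc, vnorm_eq hv, ← zpow_add₀ q_pos.ne', neg_add]

theorem isOrthTuple_iff_LI {u : ι₂ → ι₁ → LaurentSeries Fq} (hu : ∀ j, u j ≠ 0) :
    IsOrthTuple Fq u ↔ LinearIndependent Fq (fun j => LCv (u j)) := by
  constructor
  · -- orthogonal → leading vectors independent
    intro h
    rw [linearIndependent_iff']
    intro s γ hγ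
    by_contra hne
    push_neg at hne
    obtain ⟨j₀, hj₀s, hj₀⟩ := hne
    -- extend γ by zero
    set γ' : ι₂ → Fq := fun j => if j ∈ s then γ j else 0 with hγ'
    have hγsum : ∑ j, γ' j • LCv (u j) = 0 := by
      rw [← hγ]
      rw [← Finset.sum_subset (Finset.subset_univ s)]
      · exact Finset.sum_congr rfl fun j hj => by simp [hγ', hj]
      · intro j _ hj; simp [hγ', hj]
    set c : ι₂ → K := fun j => HahnSeries.single (-(dd (u j))) (γ' j) with hc
    have key := h.2 c
    -- RHS equals 1
    have hrhs : (Finset.univ.sup fun j => vnorm Fq (c j • u j)) = 1 := by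
      apply le_antisymm
      · apply Finset.sup_le
        intro j _
        by_cases hγj : γ' j = 0
        · have hc0 : c j = 0 := by simp [hc, hγj]
          rw [hc0, vnorm_smul, kabs_zero, zero_mul]
          exact zero_le
        · rw [vnorm_smul_eq (HahnSeries.single_ne_zero hγj) (hu j),
            HahnSeries.order_single hγj]
          simp
      · have h1 : γ' j₀ ≠ 0 := by simpa [hγ', hj₀s] using hj₀
        have : vnorm Fq (c j₀ • u j₀) = 1 := by
          rw [vnorm_smul_eq (HahnSeries.single_ne_zero h1) (hu j₀),
            HahnSeries.order_single h1]
          simp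
        rw [← this]
        exact Finset.le_sup (f := fun j => vnorm Fq (c j • u j)) (Finset.mem_univ j₀)
    -- LHS is at most q⁻¹
    have hlhs : vnorm Fq (∑ j, c j • u j) ≤ q ^ (-(1:ℤ)) := by
      have := vnorm_le_of_coeff (v := ∑ j, c j • u j) (M := 0) ?_
      · simpa using this
      intro i m hm
      rw [Finset.sum_apply, hs_coeff_sum]
      have hterm : ∀ j, ((c j • u j) i).coeff m
          = if m = 0 then γ' j * LCv (u j) i else 0 := by
        intro j
        rw [Pi.smul_apply, smul_eq_mul]
        by_cases hγj : γ' j = 0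
        · have hc0 : c j = 0 := by simp [hc, hγj]
          rw [hc0, zero_mul, HahnSeries.coeff_zero, hγj]
          simp
        rcases lt_or_eq_of_le hm with hm0 | hm0
        · rw [if_neg (by omega), hc]
          apply coeff_mul_zero_of_lt (d := dd (u j)) (fun m' hm' => coeff_eq_zero_of_lt_dd hm' i)
          rw [HahnSeries.order_single hγj]
          omega
        · rw [if_pos hm0, hm0, hc]
          have h0 : (0:ℤ) = (HahnSeries.single (-(dd (u j))) (γ' j) : K).order + dd (u j) := by
            rw [HahnSeries.order_single hγj]; ring
          rw [h0, coeff_mul_order_add (HahnSeries.single_ne_zero hγj)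
            (fun m' hm' => coeff_eq_zero_of_lt_dd hm' i), HahnSeries.order_single hγj,
            HahnSeries.coeff_single_same]
          simp only [hγ']
          rfl
      rw [Finset.sum_congr rfl (fun j _ => hterm j)]
      split_ifs with h0
      · have := congrFun hγsum i
        rw [Finset.sum_apply] at this
        simpa [Pi.smul_apply, smul_eq_mul] using this
      · simp
    rw [key, hrhs] at hlhs
    have : (1:ℝ≥0) ≤ q ^ (-(1:ℤ)) := hlhs
    have h2 : (q:ℝ≥0) ^ (-(1:ℤ)) < q ^ (0:ℤ) := zpow_lt_zpow_right₀ q_one_lt (by omega)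
    rw [zpow_zero] at h2
    exact absurd (lt_of_le_of_lt this h2) (lt_irrefl _)
  · -- leading vectors independent → orthogonal
    intro hLI
    refine ⟨hu, fun c => ?_⟩
    by_cases hT : (Finset.univ.filter (fun j => c j ≠ 0)).Nonempty
    case neg =>
      have hc : ∀ j, c j = 0 := by
        intro j
        by_contra hj
        exact hT ⟨j, by simpa using hj⟩
      have h1 : ∀ j, vnorm Fq (c j • u j) = 0 := fun j => by
        rw [hc j, vnorm_smul, kabs_zero, zero_mul]
      have h2 : ∀ j, c j • u j = 0 := fun j => by
        rw [← vnorm_eq_zero]; exact h1 j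
      rw [Finset.sum_congr rfl (fun j _ => h2 j), Finset.sum_const_zero, vnorm_zero]
      symm
      apply le_antisymm _ (zero_le)
      apply Finset.sup_le; intro j _
      rw [h1 j]
    case pos =>
      set T := Finset.univ.filter (fun j => c j ≠ 0) with hTdef
      set m := T.inf' hT (fun j => (c j).order + dd (u j)) with hm
      have hmem : ∀ j ∈ T, c j ≠ 0 := fun j hj => by
        rw [hTdef] at hj; exact (Finset.mem_filter.mp hj).2
      -- RHS = q^{-m}
      have hrhs : (Finset.univ.sup fun j => vnorm Fq (c j • u j)) = q ^ (-m) := by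
        apply le_antisymm
        · apply Finset.sup_le
          intro j _
          by_cases hj : c j = 0
          · rw [hj, vnorm_smul, kabs_zero, zero_mul]; exact zero_le
          · rw [vnorm_smul_eq hj (hu j)]
            apply zpow_le_zpow_right₀ q_one_lt.le
            have : m ≤ (c j).order + dd (u j) :=
              Finset.inf'_le _ (by rw [hTdef]; exact Finset.mem_filter.mpr ⟨Finset.mem_univ j, hj⟩)
            omega
        · obtain ⟨j₀, hj₀T, hj₀⟩ := Finset.exists_mem_eq_inf' hT (fun j => (c j).order + dd (u j))
          rw [hm, hj₀, ← vnorm_smul_eq (hmem j₀ hj₀T) (hu j₀)]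
          exact Finset.le_sup (f := fun j => vnorm Fq (c j • u j)) (Finset.mem_univ j₀)
      rw [hrhs]
      apply le_antisymm
      · calc vnorm Fq (∑ j, c j • u j) ≤ Finset.univ.sup fun j => vnorm Fq (c j • u j) :=
            vnorm_sum_le _ _
          _ = q ^ (-m) := hrhs
      · -- coefficient of the sum at level m is a nonzero combination of the LCv
        set S := T.filter (fun j => (c j).order + dd (u j) = m) with hS
        set γ : ι₂ → Fq := fun j => if j ∈ S then (c j).coeff ((c j).order) else 0 with hγ
        have hcoeff : ∀ i, ((∑ j, c j • u j) i).coeff m = (∑ j, γ j • LCv (u j)) i := by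
          intro i
          rw [Finset.sum_apply, hs_coeff_sum, Finset.sum_apply]
          apply Finset.sum_congr rfl
          intro j _
          rw [Pi.smul_apply, smul_eq_mul, Pi.smul_apply, smul_eq_mul]
          by_cases hjT : j ∈ T
          · by_cases hjS : j ∈ S
            · have he : (c j).order + dd (u j) = m := by
                rw [hS] at hjS; exact (Finset.mem_filter.mp hjS).2
              rw [← he, coeff_mul_order_add (hmem j hjT)
                (fun m' hm' => coeff_eq_zero_of_lt_dd hm' i)]
              have hγval : γ j = (c j).coeff ((c j).order) := by
                rw [hγ]; exact if_pos hjS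
              rw [hγval]
              rfl
            · have hlt : m < (c j).order + dd (u j) := by
                have h1 : m ≤ (c j).order + dd (u j) := Finset.inf'_le _ hjT
                have h2 : (c j).order + dd (u j) ≠ m := by
                  intro hc2
                  exact hjS (by rw [hS]; exact Finset.mem_filter.mpr ⟨hjT, hc2⟩)
                omega
              have hγval : γ j = 0 := by rw [hγ]; exact if_neg hjS
              rw [coeff_mul_zero_of_lt (fun m' hm' => coeff_eq_zero_of_lt_dd hm' i) hlt,
                hγval, zero_mul]
          · have hj0 : c j = 0 := by
              by_contra hj
              exact hjT (by rw [hTdef]; exact Finset.mem_filter.mpr ⟨Finset.mem_univ j, hj⟩)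
            have hjS : j ∉ S := fun hjS => hjT (Finset.mem_of_mem_filter j hjS)
            have hγval : γ j = 0 := by rw [hγ]; exact if_neg hjS
            rw [hj0, zero_mul, HahnSeries.coeff_zero, hγval, zero_mul]
        have hγne : ∃ j, γ j ≠ 0 := by
          obtain ⟨j₀, hj₀T, hj₀⟩ := Finset.exists_mem_eq_inf' hT (fun j => (c j).order + dd (u j))
          refine ⟨j₀, ?_⟩
          have hjS : j₀ ∈ S := by
            rw [hS]
            refine Finset.mem_filter.mpr ⟨hj₀T, ?_⟩
            rw [← hm] at hj₀
            exact hj₀.symm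
          have hγval : γ j₀ = (c j₀).coeff ((c j₀).order) := by
            rw [hγ]; exact if_pos hjS
          rw [hγval]
          exact HahnSeries.coeff_order_eq_zero.not.2 (hmem j₀ hj₀T)
        have hsum_ne : ∑ j, γ j • LCv (u j) ≠ 0 := by
          intro h0
          obtain ⟨j₀, hj₀⟩ := hγne
          exact hj₀ (Fintype.linearIndependent_iff.mp hLI γ h0 j₀)
        obtain ⟨i, hi⟩ := Function.ne_iff.mp hsum_ne
        have : ((∑ j, c j • u j) i).coeff m ≠ 0 := by
          rw [hcoeff i]
          simpa using hi
        exact le_vnorm_of_coeff this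

end Orth
section Latt
set_option linter.unusedSectionVars false
set_option maxHeartbeats 1000000

open Classical

variable {Fq : Type} [Field Fq] [Fintype Fq]

local notation "K" => LaurentSeries Fq
local notation "q" => (Fintype.card Fq : ℝ≥0)

variable {n k : ℕ} {Λ : Set (Fin n → LaurentSeries Fq)}

lemma mem_of_comb {u : Fin k → Fin n → K} (hb : IsKSublatticeBasis Fq Λ u)
    (a : Fin k → Polynomial Fq) : ∑ j, polyToK Fq (a j) • u j ∈ Λ := by
  rw [hb.2]; exact ⟨a, rfl⟩

lemma basis_mem {u : Fin k → Fin n → K} (hb : IsKSublatticeBasis Fq Λ u) (j : Fin k) :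
    u j ∈ Λ := by
  set a : Fin k → Polynomial Fq := fun l => if l = j then 1 else 0 with ha
  have h0 : ∀ l ∈ Finset.univ, l ≠ j → polyToK Fq (a l) • u l = 0 := by
    intro l _ hl
    have : a l = 0 := by rw [ha]; exact if_neg hl
    rw [this, polyToK_zero]; exact zero_smul (LaurentSeries Fq) (u l)
  have h : ∑ l, polyToK Fq (a l) • u l = u j := by
    rw [Finset.sum_eq_single j h0 (fun h => absurd (Finset.mem_univ j) h)]
    have : a j = 1 := by rw [ha]; exact if_pos rfl
    rw [this, polyToK_one]; exact one_smul _ _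
  rw [← h]; exact mem_of_comb hb _

/-- The linear combination map of a family of vectors. -/
noncomputable def combMap (u : Fin k → Fin n → LaurentSeries Fq) :
    (Fin k → LaurentSeries Fq) →ₗ[LaurentSeries Fq] (Fin n → LaurentSeries Fq) where
  toFun a := ∑ j, a j • u j
  map_add' a b := by
    simp only [Pi.add_apply, add_smul]
    rw [Finset.sum_add_distrib]
  map_smul' c a := by
    simp only [Pi.smul_apply, smul_eq_mul, RingHom.id_apply]
    rw [Finset.smul_sum]
    exact Finset.sum_congr rfl fun j _ => mul_smul c (a j) (u j)

lemma linmap_bound (ψ : (Fin n → LaurentSeries Fq) →ₗ[LaurentSeries Fq] (Fin k → LaurentSeries Fq)) :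
    ∃ C : ℝ≥0, 0 < C ∧ ∀ w, vnorm Fq (ψ w) ≤ C * vnorm Fq w := by
  set e : Fin n → Fin n → K := fun i => fun j => if i = j then 1 else 0 with he
  refine ⟨max 1 (Finset.univ.sup fun i => vnorm Fq (ψ (e i))), lt_of_lt_of_le one_pos (le_max_left _ _), ?_⟩
  intro w
  have hw : w = ∑ i, w i • e i := pi_eq_sum_univ w
  have h1 : ψ w = ∑ i, w i • ψ (e i) := by
    conv_lhs => rw [hw]
    rw [map_sum]
    exact Finset.sum_congr rfl fun i _ => by rw [map_smul]
  rw [h1]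
  calc vnorm Fq (∑ i, w i • ψ (e i)) ≤ Finset.univ.sup (fun i => vnorm Fq (w i • ψ (e i))) :=
        vnorm_sum_le _ _
    _ ≤ _ := by
        apply Finset.sup_le
        intro i _
        rw [vnorm_smul]
        have h2 : kabs Fq (w i) ≤ vnorm Fq w :=
          Finset.le_sup (f := fun i => kabs Fq (w i)) (Finset.mem_univ i)
        have h3 : vnorm Fq (ψ (e i)) ≤ max 1 (Finset.univ.sup fun i => vnorm Fq (ψ (e i))) :=
          le_trans (Finset.le_sup (f := fun i => vnorm Fq (ψ (e i))) (Finset.mem_univ i))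
            (le_max_right _ _)
        calc kabs Fq (w i) * vnorm Fq (ψ (e i))
            ≤ vnorm Fq w * max 1 (Finset.univ.sup fun i => vnorm Fq (ψ (e i))) :=
              mul_le_mul' h2 h3
          _ = _ := mul_comm _ _

lemma lattice_dd_bdd (hΛ : IsKSublattice Fq k Λ) :
    ∃ N : ℤ, ∀ w ∈ Λ, w ≠ 0 → dd w ≤ N := by
  obtain ⟨v, hv⟩ := hΛ
  have hker : LinearMap.ker (combMap (Fq := Fq) v) = ⊥ := by
    rw [LinearMap.ker_eq_bot']
    intro a ha
    funext j
    exact Fintype.linearIndependent_iff.mp hv.1 a ha j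
  obtain ⟨ψ, hψ⟩ := LinearMap.exists_leftInverse_of_injective _ hker
  obtain ⟨C, hC, hbound⟩ := linmap_bound (Fq := Fq) (k := k) ψ
  -- every nonzero element of Λ has norm at least C⁻¹
  have key : ∀ w ∈ Λ, w ≠ 0 → C⁻¹ ≤ vnorm Fq w := by
    intro w hw hw0
    rw [hv.2] at hw
    obtain ⟨a, ha⟩ := hw
    have hcomb : w = combMap v (fun j => polyToK Fq (a j)) := ha
    obtain ⟨j, hj⟩ : ∃ j, a j ≠ 0 := by
      by_contra hc
      push_neg at hc
      apply hw0
      rw [ha]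
      apply Finset.sum_eq_zero
      intro j _
      rw [hc j, polyToK_zero]; exact zero_smul (LaurentSeries Fq) (v j)
    have h1 : (1:ℝ≥0) ≤ vnorm Fq (ψ w) := by
      rw [hcomb, ← LinearMap.comp_apply, hψ, LinearMap.id_apply]
      calc (1:ℝ≥0) ≤ kabs Fq (polyToK Fq (a j)) := one_le_kabs_polyToK hj
        _ ≤ _ := Finset.le_sup (f := fun l => kabs Fq (polyToK Fq (a l))) (Finset.mem_univ j)
    have h2 : (1:ℝ≥0) ≤ C * vnorm Fq w := le_trans h1 (hbound w)
    rw [NNReal.inv_le hC.ne']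
    exact h2
  -- convert to a bound on dd
  obtain ⟨nn, hnn⟩ := NNReal.exists_pow_lt_of_lt_one (show (0:ℝ≥0) < C⁻¹ by positivity)
    (show (q : ℝ≥0)⁻¹ < 1 by
      rw [inv_lt_one_iff₀]; right; exact q_one_lt)
  refine ⟨nn, fun w hw hw0 => ?_⟩
  have h3 : C⁻¹ ≤ q ^ (-(dd w)) := by
    rw [← vnorm_eq hw0]; exact key w hw hw0
  have h4 : (q:ℝ≥0) ^ (-(nn:ℤ)) < C⁻¹ := by
    calc (q:ℝ≥0) ^ (-(nn:ℤ)) = (q⁻¹) ^ nn := by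
          rw [zpow_neg, ← inv_zpow, zpow_natCast]
      _ < C⁻¹ := hnn
  have h5 : (q:ℝ≥0) ^ (-(nn:ℤ)) < q ^ (-(dd w)) := lt_of_lt_of_le h4 h3
  have h6 : -(nn:ℤ) < -(dd w) := (zpow_lt_zpow_iff_right₀ q_one_lt).mp h5
  omega

end Latt
section Red
set_option linter.unusedSectionVars false
set_option maxHeartbeats 1000000

open Classical

variable {Fq : Type} [Field Fq] [Fintype Fq]

local notation "K" => LaurentSeries Fq
local notation "q" => (Fintype.card Fq : ℝ≥0)

variable {n k : ℕ} {Λ : Set (Fin n → LaurentSeries Fq)}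

lemma reduction_step {u : Fin k → Fin n → K} (hb : IsKSublatticeBasis Fq Λ u)
    (hdep : ¬ LinearIndependent Fq (fun j => LCv (u j))) :
    ∃ u' : Fin k → Fin n → K, IsKSublatticeBasis Fq Λ u' ∧ ∃ j₀ : Fin k,
      (∀ j, j ≠ j₀ → u' j = u j) ∧ vnorm Fq (u' j₀) < vnorm Fq (u j₀) := by
  have hu : ∀ j, u j ≠ 0 := fun j => hb.1.ne_zero j
  obtain ⟨γ, hγsum, j₁, hγj₁⟩ := Fintype.not_linearIndependent_iff.mp hdep
  set T : Finset (Fin k) := Finset.univ.filter (fun j => γ j ≠ 0) with hT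
  have hTne : T.Nonempty := ⟨j₁, by rw [hT]; exact Finset.mem_filter.mpr ⟨Finset.mem_univ _, hγj₁⟩⟩
  obtain ⟨j₀, hj₀T, hj₀min⟩ := Finset.exists_min_image T (fun j => dd (u j)) hTne
  have hγ₀ : γ j₀ ≠ 0 := by rw [hT] at hj₀T; exact (Finset.mem_filter.mp hj₀T).2
  have hγT : ∀ l, l ∉ T → γ l = 0 := by
    intro l hl
    by_contra hc
    exact hl (by rw [hT]; exact Finset.mem_filter.mpr ⟨Finset.mem_univ _, hc⟩)
  set e : Fin k → ℕ := fun j => (dd (u j) - dd (u j₀)).toNat with he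
  set p : Fin k → Polynomial Fq := fun j => Polynomial.C (γ j) * Polynomial.X ^ (e j) with hp
  set P : Fin k → K := fun j => polyToK Fq (p j) with hP
  have hpj : ∀ j, p j = Polynomial.C (γ j) * Polynomial.X ^ (e j) := fun j => by rw [hp]
  have hPpoly : ∀ j, P j = polyToK Fq (p j) := fun j => by rw [hP]
  have hPval : ∀ j, P j = HahnSeries.single (-(e j : ℤ)) (γ j) := fun j => by
    rw [hPpoly j, hpj j]; exact polyToK_C_mul_X_pow (γ j) (e j)
  have hePos : ∀ j ∈ T, (e j : ℤ) = dd (u j) - dd (u j₀) := by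
    intro j hj
    rw [he]
    have := hj₀min j hj
    simp only []
    omega
  have hej₀ : e j₀ = 0 := by rw [he]; simp
  set w₀ : Fin n → K := ∑ l, P l • u l with hw₀
  set u' : Fin k → Fin n → K := Function.update u j₀ w₀ with hu'
  -- key expansion
  have expand : ∀ d : Fin k → K,
      ∑ j, d j • u' j = ∑ j, ((if j = j₀ then 0 else d j) + d j₀ * P j) • u j := by
    intro d
    have h1 : ∑ j, d j • u' j
        = ∑ j ∈ Finset.univ.erase j₀, d j • u' j + d j₀ • u' j₀ :=
      (Finset.sum_erase_add _ _ (Finset.mem_univ j₀)).symm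
    have h2 : ∀ j ∈ Finset.univ.erase j₀, d j • u' j = d j • u j := by
      intro j hj
      rw [hu', Function.update_of_ne (Finset.mem_erase.mp hj).1]
    have h3 : d j₀ • u' j₀ = ∑ l, (d j₀ * P l) • u l := by
      have hup : u' j₀ = w₀ := by rw [hu']; exact Function.update_self _ _ _
      rw [hup, hw₀, Finset.smul_sum]
      exact Finset.sum_congr rfl fun l _ => (mul_smul (d j₀) (P l) (u l)).symm
    have h4 : ∑ j, (if j = j₀ then (0:K) else d j) • u j
        = ∑ j ∈ Finset.univ.erase j₀, d j • u j := by
      rw [← Finset.sum_erase_add _ _ (Finset.mem_univ j₀), if_pos rfl]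
      have h0 : (0:K) • u j₀ = 0 := by funext i; exact zero_mul _
      rw [h0, add_zero]
      exact Finset.sum_congr rfl fun j hj => by rw [if_neg (Finset.mem_erase.mp hj).1]
    calc ∑ j, d j • u' j
        = ∑ j ∈ Finset.univ.erase j₀, d j • u j + d j₀ • u' j₀ := by
          rw [h1]; congr 1; exact Finset.sum_congr rfl h2
      _ = ∑ j, (if j = j₀ then (0:K) else d j) • u j + ∑ j, (d j₀ * P j) • u j := by
          rw [h4, h3]
      _ = ∑ j, ((if j = j₀ then 0 else d j) + d j₀ * P j) • u j := by
          rw [← Finset.sum_add_distrib]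
          refine Finset.sum_congr rfl fun j _ => ?_
          funext i
          exact (add_mul _ _ _).symm
  -- linear independence of u'
  have hli' : LinearIndependent (LaurentSeries Fq) u' := by
    rw [Fintype.linearIndependent_iff]
    intro d hd
    rw [expand d] at hd
    have hcoef := Fintype.linearIndependent_iff.mp hb.1 _ hd
    have hd₀ : d j₀ = 0 := by
      have h := hcoef j₀
      rw [if_pos rfl, zero_add] at h
      have hP₀ : P j₀ ≠ 0 := by
        rw [hPval j₀]
        exact HahnSeries.single_ne_zero hγ₀
      exact (mul_eq_zero.mp h).resolve_right hP₀
    intro j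
    by_cases hj : j = j₀
    · rw [hj]; exact hd₀
    · have h := hcoef j
      rw [if_neg hj, hd₀, zero_mul, add_zero] at h
      exact h
  -- same lattice
  have hset : Λ = {w | ∃ b : Fin k → Polynomial Fq, w = ∑ j, polyToK Fq (b j) • u' j} := by
    rw [hb.2]
    ext w
    constructor
    · rintro ⟨a, rfl⟩
      set b : Fin k → Polynomial Fq := fun j => if j = j₀ then Polynomial.C (γ j₀)⁻¹ * a j₀
        else a j - Polynomial.C (γ j₀)⁻¹ * a j₀ * p j with hbdef
      have hb₀ : b j₀ = Polynomial.C (γ j₀)⁻¹ * a j₀ := by rw [hbdef]; exact if_pos rfl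
      have hbne : ∀ j, j ≠ j₀ → b j = a j - Polynomial.C (γ j₀)⁻¹ * a j₀ * p j := by
        intro j hj; rw [hbdef]; exact if_neg hj
      have hCC : Polynomial.C (γ j₀)⁻¹ * Polynomial.C (γ j₀) = 1 := by
        rw [← Polynomial.C_mul, inv_mul_cancel₀ hγ₀, Polynomial.C_1]
      refine ⟨b, ?_⟩
      rw [expand]
      apply Finset.sum_congr rfl
      intro j _
      congr 1
      by_cases hj : j = j₀
      · subst hj
        rw [if_pos rfl, zero_add, hPpoly j, ← polyToK_mul]
        congr 1
        rw [hb₀, hpj j, hej₀, pow_zero, mul_one]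
        linear_combination (-(a j)) * hCC
      · rw [if_neg hj, hPpoly j, ← polyToK_mul, ← polyToK_add]
        congr 1
        rw [hbne j hj, hb₀]
        ring
    · rintro ⟨b, rfl⟩
      set a : Fin k → Polynomial Fq := fun j => (if j = j₀ then 0 else b j) + b j₀ * p j
        with hadef
      have haj : ∀ j, a j = (if j = j₀ then 0 else b j) + b j₀ * p j := fun j => by rw [hadef]
      refine ⟨a, ?_⟩
      rw [expand]
      apply Finset.sum_congr rfl
      intro j _
      congr 1
      rw [haj j, polyToK_add, polyToK_mul, hPpoly j]
      congr 1
      split_ifs with hj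
      · rw [polyToK_zero]
      · rfl
  -- norm decrease
  have hupj₀ : u' j₀ = w₀ := by rw [hu']; exact Function.update_self _ _ _
  have hw₀ne : w₀ ≠ 0 := by
    have := hli'.ne_zero j₀
    rwa [hupj₀] at this
  have hcoeffzero : ∀ (i : Fin n) (m : ℤ), m ≤ dd (u j₀) → (w₀ i).coeff m = 0 := by
    intro i m hm
    rw [hw₀, Finset.sum_apply, hs_coeff_sum]
    rcases lt_or_eq_of_le hm with hlt | heq
    · apply Finset.sum_eq_zero
      intro l _
      rw [Pi.smul_apply, smul_eq_mul]
      by_cases hl : γ l = 0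
      · have hPl0 : P l = 0 := by rw [hPval l, hl]; simp
        rw [hPl0, zero_mul, HahnSeries.coeff_zero]
      · have hlT : l ∈ T := by
          rw [hT]; exact Finset.mem_filter.mpr ⟨Finset.mem_univ _, hl⟩
        apply coeff_mul_zero_of_lt (d := dd (u l)) (fun m' hm' => coeff_eq_zero_of_lt_dd hm' i)
        rw [hPval l, HahnSeries.order_single hl, hePos l hlT]
        omega
    · have hterm : ∀ l, ((P l) * (u l i)).coeff m = γ l * LCv (u l) i := by
        intro l
        by_cases hl : γ l = 0
        · have hPl0 : P l = 0 := by rw [hPval l, hl]; simp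
          rw [hPl0, zero_mul, HahnSeries.coeff_zero, hl, zero_mul]
        · have hlT : l ∈ T := by
            rw [hT]; exact Finset.mem_filter.mpr ⟨Finset.mem_univ _, hl⟩
          have hPl : P l ≠ 0 := by
            rw [hPval l]; exact HahnSeries.single_ne_zero hl
          have hords : m = (P l).order + dd (u l) := by
            rw [hPval l, HahnSeries.order_single hl, hePos l hlT]
            omega
          rw [hords, coeff_mul_order_add hPl (fun m' hm' => coeff_eq_zero_of_lt_dd hm' i)]
          rw [hPval l, HahnSeries.order_single hl, HahnSeries.coeff_single_same]
          rfl
      have hsum : ∑ l, ((P l • u l) i).coeff m = ∑ l, γ l * LCv (u l) i := by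
        apply Finset.sum_congr rfl
        intro l _
        rw [Pi.smul_apply, smul_eq_mul]
        exact hterm l
      rw [hsum]
      have hγs := congrFun hγsum i
      rw [Finset.sum_apply] at hγs
      simpa [Pi.smul_apply, smul_eq_mul] using hγs
  have hnorm : vnorm Fq w₀ < vnorm Fq (u j₀) := by
    have h1 : vnorm Fq w₀ ≤ q ^ (-(dd (u j₀) + 1)) :=
      vnorm_le_of_coeff (fun i m hm => hcoeffzero i m hm)
    have h2 : (q:ℝ≥0) ^ (-(dd (u j₀) + 1)) < q ^ (-(dd (u j₀))) :=
      zpow_lt_zpow_right₀ q_one_lt (by omega)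
    rw [vnorm_eq (hu j₀)]
    exact lt_of_le_of_lt h1 h2
  refine ⟨u', ⟨hli', hset⟩, j₀, ?_, ?_⟩
  · intro j hj
    rw [hu']
    exact Function.update_of_ne hj _ _
  · rw [hupj₀]
    exact hnorm

end Red
section Ex
set_option linter.unusedSectionVars false
set_option maxHeartbeats 1000000

open Classical

variable {Fq : Type} [Field Fq] [Fintype Fq]

local notation "K" => LaurentSeries Fq
local notation "q" => (Fintype.card Fq : ℝ≥0)

variable {n k : ℕ} {Λ : Set (Fin n → LaurentSeries Fq)}

lemma exists_orth_basis (hΛ : IsKSublattice Fq k Λ) :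
    ∃ u : Fin k → Fin n → K, IsKSublatticeBasis Fq Λ u ∧ IsOrthTuple Fq u := by
  obtain ⟨N, hN⟩ := lattice_dd_bdd hΛ
  obtain ⟨v, hv⟩ := hΛ
  have hbdd : ∃ b : ℤ, ∀ z : ℤ,
      (∃ u : Fin k → Fin n → K, IsKSublatticeBasis Fq Λ u ∧ z = ∑ j, dd (u j)) → z ≤ b := by
    refine ⟨k * N, ?_⟩
    rintro z ⟨u, hu, rfl⟩
    calc ∑ j, dd (u j) ≤ ∑ _j : Fin k, N :=
          Finset.sum_le_sum (fun j _ => hN (u j) (basis_mem hu j) (hu.1.ne_zero j))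
      _ = k * N := by
          rw [Finset.sum_const, Finset.card_univ, Fintype.card_fin, nsmul_eq_mul]
  have hinh : ∃ z : ℤ,
      ∃ u : Fin k → Fin n → K, IsKSublatticeBasis Fq Λ u ∧ z = ∑ j, dd (u j) :=
    ⟨∑ j, dd (v j), v, hv, rfl⟩
  obtain ⟨s, ⟨u, hu, hs⟩, hmax⟩ := Int.exists_greatest_of_bdd hbdd hinh
  refine ⟨u, hu, ?_⟩
  rw [isOrthTuple_iff_LI (fun j => hu.1.ne_zero j)]
  by_contra hdep
  obtain ⟨u', hu', j₀, hagree, hlt⟩ := reduction_step hu hdep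
  have h1 : dd (u j₀) < dd (u' j₀) :=
    (vnorm_lt_vnorm (hu'.1.ne_zero j₀) (hu.1.ne_zero j₀)).mp hlt
  have hsum : ∑ j, dd (u j) < ∑ j, dd (u' j) := by
    have hs1 : ∑ j ∈ Finset.univ.erase j₀, dd (u j) + dd (u j₀) = ∑ j, dd (u j) :=
      Finset.sum_erase_add _ _ (Finset.mem_univ j₀)
    have hs2 : ∑ j ∈ Finset.univ.erase j₀, dd (u' j) + dd (u' j₀) = ∑ j, dd (u' j) :=
      Finset.sum_erase_add _ _ (Finset.mem_univ j₀)
    have hs3 : ∑ j ∈ Finset.univ.erase j₀, dd (u' j) = ∑ j ∈ Finset.univ.erase j₀, dd (u j) :=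
      Finset.sum_congr rfl fun j hj => by rw [hagree j (Finset.mem_erase.mp hj).1]
    omega
  have := hmax (∑ j, dd (u' j)) ⟨u', hu', rfl⟩
  omega

end Ex
section Min
set_option linter.unusedSectionVars false
set_option maxHeartbeats 1000000
set_option synthInstance.maxHeartbeats 1000000

open Classical

variable {Fq : Type} [Field Fq] [Fintype Fq]

local notation "K" => LaurentSeries Fq
local notation "q" => (Fintype.card Fq : ℝ≥0)

variable {n k : ℕ} {Λ : Set (Fin n → LaurentSeries Fq)}


/-- Generic: a linearly independent family inside the span of a finset has size at most the
cardinality of the finset. -/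
lemma card_le_of_linIndep_in_span {F M : Type*} [Field F] [AddCommGroup M] [Module F M]
    {m r : ℕ} (w : Fin m → M) (hw : LinearIndependent F w) (s : Finset M)
    (hs : ∀ j, w j ∈ Submodule.span F (↑s : Set M)) (hcard : s.card ≤ r) : m ≤ r := by
  haveI := FiniteDimensional.span_of_finite F s.finite_toSet
  have hv : LinearIndependent F (fun j => (⟨w j, hs j⟩ : Submodule.span F (↑s : Set M))) := by
    apply LinearIndependent.of_comp (Submodule.span F (↑s : Set M)).subtype
    have he : (Submodule.span F (↑s : Set M)).subtype ∘
        (fun j => (⟨w j, hs j⟩ : Submodule.span F (↑s : Set M))) = w := by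
      funext j; rfl
    rw [he]
    exact hw
  have h1 := hv.fintype_card_le_finrank
  rw [Fintype.card_fin] at h1
  have h2 : Module.finrank F (Submodule.span F (↑s : Set M)) ≤ s.card :=
    finrank_span_finset_le_card s
  omega

/-- The permutation sorting the basis vectors by increasing norm. -/
noncomputable def sortPerm (u : Fin k → Fin n → LaurentSeries Fq) : Equiv.Perm (Fin k) :=
  Tuple.sort (fun j => vnorm Fq (u j))

lemma sortPerm_mono {u : Fin k → Fin n → K} {a b : Fin k} (h : a ≤ b) :
    vnorm Fq (u (sortPerm u a)) ≤ vnorm Fq (u (sortPerm u b)) :=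
  Tuple.monotone_sort (fun j => vnorm Fq (u j)) h

lemma witness_prop {u : Fin k → Fin n → K} (hb : IsKSublatticeBasis Fq Λ u) (i : Fin k) :
    ∃ w : Fin ((i:ℕ) + 1) → Fin n → LaurentSeries Fq,
      (∀ m, w m ∈ Λ) ∧ LinearIndependent (LaurentSeries Fq) w ∧
        ∀ m, vnorm Fq (w m) ≤ vnorm Fq (u (sortPerm u i)) := by
  refine ⟨fun m => u (sortPerm u (Fin.castLE i.isLt m)), fun m => basis_mem hb _, ?_, ?_⟩
  · have hinj : Function.Injective (fun m : Fin ((i:ℕ)+1) => sortPerm u (Fin.castLE i.isLt m)) :=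
      (sortPerm u).injective.comp (Fin.castLE_injective _)
    exact hb.1.comp _ hinj
  · intro m
    apply sortPerm_mono
    rw [Fin.le_def]
    have := m.isLt
    simp only [Fin.coe_castLE]
    omega

lemma sminima_le_sorted {u : Fin k → Fin n → K} (hb : IsKSublatticeBasis Fq Λ u) (i : Fin k) :
    sminima Fq Λ ((i:ℕ) + 1) ≤ vnorm Fq (u (sortPerm u i)) := by
  apply csInf_le (OrderBot.bddBelow _)
  exact witness_prop hb i

lemma sorted_le_sminima {u : Fin k → Fin n → K} (hb : IsKSublatticeBasis Fq Λ u)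
    (ho : IsOrthTuple Fq u) (i : Fin k) :
    vnorm Fq (u (sortPerm u i)) ≤ sminima Fq Λ ((i:ℕ) + 1) := by
  apply le_csInf
  · exact ⟨_, witness_prop hb i⟩
  · rintro r ⟨w, hwmem, hwli, hwle⟩
    by_contra hc
    push_neg at hc
    set J : Finset (Fin k) :=
      Finset.univ.filter (fun l => vnorm Fq (u l) < vnorm Fq (u (sortPerm u i))) with hJ
    have hJmem : ∀ l, vnorm Fq (u l) < vnorm Fq (u (sortPerm u i)) → l ∈ J := fun l hl => by
      rw [hJ]; exact Finset.mem_filter.mpr ⟨Finset.mem_univ _, hl⟩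
    have hwspan : ∀ m : Fin ((i:ℕ)+1),
        w m ∈ Submodule.span (LaurentSeries Fq) (↑(J.image u) : Set (Fin n → LaurentSeries Fq)) := by
      intro m
      have hmem := hwmem m
      rw [hb.2] at hmem
      obtain ⟨a, ha⟩ := hmem
      have hasupp : ∀ l, a l ≠ 0 → l ∈ J := by
        intro l hal
        apply hJmem
        have h1 : vnorm Fq (polyToK Fq (a l) • u l) ≤ vnorm Fq (w m) := by
          rw [ha, ho.2 (fun l => polyToK Fq (a l))]
          exact Finset.le_sup (f := fun l => vnorm Fq (polyToK Fq (a l) • u l))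
            (Finset.mem_univ l)
        have h2 : vnorm Fq (u l) ≤ vnorm Fq (polyToK Fq (a l) • u l) := by
          rw [vnorm_smul]
          calc vnorm Fq (u l) = 1 * vnorm Fq (u l) := (one_mul _).symm
            _ ≤ _ := mul_le_mul_left (one_le_kabs_polyToK hal) _
        exact lt_of_le_of_lt (le_trans h2 (le_trans h1 (hwle m))) hc
      rw [ha]
      apply Submodule.sum_mem
      intro l _
      by_cases hal : a l = 0
      · rw [hal, polyToK_zero]
        have h0 : (0 : LaurentSeries Fq) • u l = 0 := by funext i'; exact zero_mul _
        rw [h0]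
        exact Submodule.zero_mem _
      · refine Submodule.smul_mem _ _ (Submodule.subset_span ?_)
        rw [Finset.coe_image]
        exact ⟨l, hasupp l hal, rfl⟩
    have hcard : (J.image u).card ≤ (i:ℕ) := by
      have hsub : J ⊆ Finset.image
          (fun m : Fin (i:ℕ) => sortPerm u (Fin.castLE (le_of_lt i.isLt) m)) Finset.univ := by
        intro l hl
        have hvl : vnorm Fq (u l) < vnorm Fq (u (sortPerm u i)) := by
          rw [hJ] at hl; exact (Finset.mem_filter.mp hl).2
        have hml : sortPerm u ((sortPerm u).symm l) = l := (sortPerm u).apply_symm_apply l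
        have hmi : (((sortPerm u).symm l : Fin k) : ℕ) < (i:ℕ) := by
          by_contra hge
          push_neg at hge
          have hile : i ≤ (sortPerm u).symm l := by rw [Fin.le_def]; omega
          have hmono := sortPerm_mono (u := u) hile
          rw [hml] at hmono
          exact absurd hvl (not_lt.mpr hmono)
        refine Finset.mem_image.mpr ⟨⟨(((sortPerm u).symm l : Fin k) : ℕ), hmi⟩,
          Finset.mem_univ _, ?_⟩
        have hcast : Fin.castLE (le_of_lt i.isLt) ⟨(((sortPerm u).symm l : Fin k) : ℕ), hmi⟩
            = (sortPerm u).symm l := by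
          apply Fin.ext
          simp [Fin.coe_castLE]
        rw [hcast, hml]
      calc (J.image u).card ≤ J.card := Finset.card_image_le
        _ ≤ (Finset.image (fun m : Fin (i:ℕ) =>
              sortPerm u (Fin.castLE (le_of_lt i.isLt) m)) Finset.univ).card :=
            Finset.card_le_card hsub
        _ ≤ (Finset.univ : Finset (Fin (i:ℕ))).card := Finset.card_image_le
        _ = (i:ℕ) := by rw [Finset.card_univ, Fintype.card_fin]
    have hdim := card_le_of_linIndep_in_span w hwli (J.image u) hwspan hcard
    omega

end Min
/-- **Existence and characterization of orthogonal bases of sublattices.**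
Every `k`-sublattice `Λ` of `K^n` (`K = Fq((x⁻¹))`, `R = Fq[x]`) has an orthogonal
`R`-basis; moreover an `R`-basis of `Λ` is orthogonal if and only if it is a basis of
successive minima, i.e. after reordering its elements realise the successive minima of
`Λ`. -/
theorem sublattice_orthogonal_basis (Fq : Type) [Field Fq] [Fintype Fq] (n k : ℕ)
    (hk : 1 ≤ k) (hkn : k ≤ n)
    (Λ : Set (Fin n → LaurentSeries Fq)) (hΛ : IsKSublattice Fq k Λ) :
    (∃ u : Fin k → Fin n → LaurentSeries Fq, IsKSublatticeBasis Fq Λ u ∧ IsOrthTuple Fq u) ∧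
      ∀ u : Fin k → Fin n → LaurentSeries Fq, IsKSublatticeBasis Fq Λ u →
        (IsOrthTuple Fq u ↔
          ∃ σ : Equiv.Perm (Fin k), ∀ i : Fin k, vnorm Fq (u (σ i)) = sminima Fq Λ (i + 1)) := by
  classical
  constructor
  · exact exists_orth_basis hΛ
  · intro u hb
    constructor
    · intro ho
      refine ⟨sortPerm u, fun i => ?_⟩
      exact le_antisymm (sorted_le_sminima hb ho i) (sminima_le_sorted hb i)
    · rintro ⟨σ, hσ⟩
      by_contra hno
      rw [isOrthTuple_iff_LI (fun j => hb.1.ne_zero j)] at hno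
      obtain ⟨u', hu', j₀, hagree, hlt⟩ := reduction_step hb hno
      have hprod1 : ∏ i : Fin k, sminima Fq Λ ((i:ℕ)+1) = ∏ j, vnorm Fq (u j) := by
        rw [← Equiv.prod_comp σ (fun j => vnorm Fq (u j))]
        exact Finset.prod_congr rfl fun i _ => (hσ i).symm
      have hprod2 : ∏ i : Fin k, sminima Fq Λ ((i:ℕ)+1) ≤ ∏ j, vnorm Fq (u' j) := by
        calc ∏ i : Fin k, sminima Fq Λ ((i:ℕ)+1)
            ≤ ∏ i : Fin k, vnorm Fq (u' (sortPerm u' i)) :=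
              Finset.prod_le_prod' fun i _ => sminima_le_sorted hu' i
          _ = ∏ j, vnorm Fq (u' j) := Equiv.prod_comp (sortPerm u') (fun j => vnorm Fq (u' j))
      have hprod3 : ∏ j, vnorm Fq (u' j) < ∏ j, vnorm Fq (u j) := by
        have e1 : (∏ j ∈ Finset.univ.erase j₀, vnorm Fq (u' j)) * vnorm Fq (u' j₀)
            = ∏ j, vnorm Fq (u' j) :=
          Finset.prod_erase_mul _ _ (Finset.mem_univ j₀)
        have e2 : (∏ j ∈ Finset.univ.erase j₀, vnorm Fq (u j)) * vnorm Fq (u j₀)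
            = ∏ j, vnorm Fq (u j) :=
          Finset.prod_erase_mul _ _ (Finset.mem_univ j₀)
        have e3 : ∏ j ∈ Finset.univ.erase j₀, vnorm Fq (u' j)
            = ∏ j ∈ Finset.univ.erase j₀, vnorm Fq (u j) :=
          Finset.prod_congr rfl fun j hj => by rw [hagree j (Finset.mem_erase.mp hj).1]
        rw [← e1, ← e2, e3]
        apply mul_lt_mul_of_pos_left hlt
        apply Finset.prod_pos
        intro j _
        exact pos_iff_ne_zero.mpr (vnorm_ne_zero (hb.1.ne_zero j))
      rw [hprod1] at hprod2
      exact absurd (lt_of_le_of_lt hprod2 hprod3) (lt_irrefl _)
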